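/- With h and g0 as above, for fixed t0 > 0 and t6 ≠ 0 the integral ∫_0^{∞} g0(t0,t5,t6) dt5 is at most C · min{ t0^{-1/2}|t6|^{-5/4}, t0^{-8} } for some absolute constant C. -/

import Mathlib

open MeasureTheory

noncomputable def h (t0 t1 t5 t6 : ℝ) : ℝ :=
  max (|t0 ^ 4 * t5|) (max (|t0 ^ 4 * t1|)
    (max (|t1 * t5 ^ 2 * t6 ^ 2 + t0 ^ 2 * t1 ^ 2 * t6|)
      (max (|t0 ^ 2 * t1 * t5 * t6|)
        (max (|t0 ^ 2 * t5 ^ 2 * t6 + t0 ^ 4 * t1|)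
          (|t5 ^ 3 * t6 ^ 2 + t0 ^ 2 * t1 * t5 * t6|)))))

noncomputable def g0 (t0 t5 t6 : ℝ) : ℝ :=
  (volume {t1 : ℝ | h t0 t1 t5 t6 ≤ 1}).toReal

open Set

lemma ann_vol (c M : ℝ) (hM : 0 ≤ M) :
    volume {x : ℝ | |x * (x + c)| ≤ M} ≤
      ENNReal.ofReal (2 * (Real.sqrt (c^2/4 + M) - Real.sqrt (c^2/4 - M))) := by
  set R := Real.sqrt (c^2/4 + M) with hR
  set r := Real.sqrt (c^2/4 - M) with hr
  have hrR : r ≤ R := Real.sqrt_le_sqrt (by linarith)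
  have hr0 : 0 ≤ r := Real.sqrt_nonneg _
  have hsub : {x : ℝ | |x * (x + c)| ≤ M} ⊆
      Icc (-c/2 - R) (-c/2 - r) ∪ Icc (-c/2 + r) (-c/2 + R) := by
    intro x hx
    simp only [mem_setOf_eq] at hx
    obtain ⟨h1, h2⟩ := abs_le.1 hx
    have hy1 : (x + c/2)^2 ≤ c^2/4 + M := by nlinarith
    have hy2 : c^2/4 - M ≤ (x + c/2)^2 := by nlinarith
    have hRb : |x + c/2| ≤ R := by
      rw [← Real.sqrt_sq_eq_abs]; exact Real.sqrt_le_sqrt hy1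
    have hrb : r ≤ |x + c/2| := by
      rw [← Real.sqrt_sq_eq_abs]; exact Real.sqrt_le_sqrt hy2
    rcases le_or_gt 0 (x + c/2) with hs | hs
    · right
      rw [abs_of_nonneg hs] at hRb hrb
      constructor <;> linarith
    · left
      rw [abs_of_neg hs] at hRb hrb
      constructor <;> linarith
  calc volume {x : ℝ | |x * (x + c)| ≤ M} ≤ volume (Icc (-c/2 - R) (-c/2 - r) ∪ Icc (-c/2 + r) (-c/2 + R)) :=
        measure_mono hsub
    _ ≤ volume (Icc (-c/2 - R) (-c/2 - r)) + volume (Icc (-c/2 + r) (-c/2 + R)) := measure_union_le _ _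
    _ = ENNReal.ofReal (R - r) + ENNReal.ofReal (R - r) := by
        rw [Real.volume_Icc, Real.volume_Icc]
        congr 1 <;> congr 1 <;> ring
    _ = ENNReal.ofReal (2 * (R - r)) := by
        rw [← ENNReal.ofReal_add (by linarith) (by linarith)]; congr 1; ring

lemma Rr_facts (c M : ℝ) (hM : 0 ≤ M) :
    Real.sqrt (c^2/4 + M) - Real.sqrt (c^2/4 - M) ≤ Real.sqrt (2*M) ∧
    (c ≠ 0 → Real.sqrt (c^2/4 + M) - Real.sqrt (c^2/4 - M) ≤ 4 * M / |c|) := by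
  set R := Real.sqrt (c^2/4 + M) with hRdef
  set r := Real.sqrt (c^2/4 - M) with hrdef
  have hrR : r ≤ R := Real.sqrt_le_sqrt (by linarith)
  have hr0 : 0 ≤ r := Real.sqrt_nonneg _
  have hR2 : R^2 = c^2/4 + M := Real.sq_sqrt (by positivity)
  have hr2 : c^2/4 - M ≤ r^2 := by
    rcases le_or_gt 0 (c^2/4 - M) with h | h
    · rw [hrdef, Real.sq_sqrt h]
    · nlinarith
  have hdiff : R^2 - r^2 ≤ 2*M := by nlinarith
  constructor
  · rw [← Real.sqrt_sq (by linarith : (0:ℝ) ≤ R - r)]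
    apply Real.sqrt_le_sqrt
    nlinarith
  · intro hc
    have hcpos : 0 < |c| := abs_pos.2 hc
    have hRc : |c|/2 ≤ R := by
      rw [hRdef]
      rw [show c^2/4 + M = (|c|/2)^2 + M by rw [← sq_abs c]; ring]
      calc |c|/2 = Real.sqrt ((|c|/2)^2) := (Real.sqrt_sq (by positivity)).symm
        _ ≤ _ := Real.sqrt_le_sqrt (by linarith)
    rw [le_div_iff₀ hcpos]
    nlinarith [mul_nonneg (sub_nonneg.2 hrR) hr0]

lemma g0_nonneg (t0 t5 t6 : ℝ) : 0 ≤ g0 t0 t5 t6 := ENNReal.toReal_nonneg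

lemma g0_subset_ann (t0 t5 t6 : ℝ) (ht0 : 0 < t0) (ht6 : t6 ≠ 0) :
    {t1 : ℝ | h t0 t1 t5 t6 ≤ 1} ⊆
      {x : ℝ | |x * (x + t5^2*t6/t0^2)| ≤ 1/(t0^2*|t6|)} := by
  intro x hx
  simp only [mem_setOf_eq] at hx ⊢
  have h3 : |x * t5 ^ 2 * t6 ^ 2 + t0 ^ 2 * x ^ 2 * t6| ≤ 1 := by
    refine le_trans ?_ hx
    unfold h
    exact (le_max_left _ _).trans ((le_max_right _ _).trans (le_max_right _ _))
  have ht02 : (0:ℝ) < t0^2 := by positivity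
  have habs : (0:ℝ) < t0^2 * |t6| := by positivity
  have key : x * (x + t5^2*t6/t0^2) * (t0^2 * t6) = x * t5 ^ 2 * t6 ^ 2 + t0 ^ 2 * x ^ 2 * t6 := by
    field_simp
    ring
  have : |x * (x + t5^2*t6/t0^2)| * (t0^2 * |t6|) ≤ 1 := by
    calc |x * (x + t5^2*t6/t0^2)| * (t0^2 * |t6|)
        = |x * (x + t5^2*t6/t0^2)| * |t0^2 * t6| := by
          rw [abs_mul (t0^2) t6, abs_of_nonneg (le_of_lt ht02)]
      _ = |x * (x + t5^2*t6/t0^2) * (t0^2 * t6)| := (abs_mul _ _).symm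
      _ = |x * t5 ^ 2 * t6 ^ 2 + t0 ^ 2 * x ^ 2 * t6| := by rw [key]
      _ ≤ 1 := h3
  rw [le_div_iff₀ habs]
  linarith

lemma g0_bound_a (t0 t5 t6 : ℝ) (ht0 : 0 < t0) (ht6 : t6 ≠ 0) :
    g0 t0 t5 t6 ≤ 2 * Real.sqrt (2 * (1/(t0^2*|t6|))) := by
  have hM : (0:ℝ) ≤ 1/(t0^2*|t6|) := by positivity
  have h1 := (measure_mono (g0_subset_ann t0 t5 t6 ht0 ht6)).trans
    (ann_vol (t5^2*t6/t0^2) (1/(t0^2*|t6|)) hM)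
  have h2 := (Rr_facts (t5^2*t6/t0^2) (1/(t0^2*|t6|)) hM).1
  refine ENNReal.toReal_le_of_le_ofReal (by positivity) (h1.trans (ENNReal.ofReal_le_ofReal ?_))
  linarith

lemma g0_bound_b (t0 t5 t6 : ℝ) (ht0 : 0 < t0) (ht6 : t6 ≠ 0) (ht5 : t5 ≠ 0) :
    g0 t0 t5 t6 ≤ 8 / (t5^2 * t6^2) := by
  have hM : (0:ℝ) ≤ 1/(t0^2*|t6|) := by positivity
  have hc : t5^2*t6/t0^2 ≠ 0 := by positivity
  have h1 := (measure_mono (g0_subset_ann t0 t5 t6 ht0 ht6)).trans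
    (ann_vol (t5^2*t6/t0^2) (1/(t0^2*|t6|)) hM)
  have h2 := (Rr_facts (t5^2*t6/t0^2) (1/(t0^2*|t6|)) hM).2 hc
  have hceq : |t5^2*t6/t0^2| = t5^2*|t6|/t0^2 := by
    rw [abs_div, abs_mul, abs_of_nonneg (sq_nonneg t5), abs_of_nonneg (by positivity : (0:ℝ) ≤ t0^2)]
  have h3 : 2 * (4 * (1/(t0^2*|t6|)) / |t5^2*t6/t0^2|) = 8 / (t5^2 * t6^2) := by
    rw [hceq]
    rw [show t6^2 = |t6|^2 from (sq_abs t6).symm]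
    field_simp
    linear_combination (0:ℝ) * sq_abs t6
  refine ENNReal.toReal_le_of_le_ofReal (by positivity) (h1.trans (ENNReal.ofReal_le_ofReal ?_))
  linarith

lemma g0_bound_c (t0 t5 t6 : ℝ) (ht0 : 0 < t0) :
    g0 t0 t5 t6 ≤ 2 * (t0^4)⁻¹ := by
  have hsub : {t1 : ℝ | h t0 t1 t5 t6 ≤ 1} ⊆ Icc (-(t0^4)⁻¹) ((t0^4)⁻¹) := by
    intro x hx
    simp only [mem_setOf_eq] at hx
    have h2 : |t0 ^ 4 * x| ≤ 1 := by
      refine le_trans ?_ hx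
      unfold h
      exact (le_max_left _ _).trans (le_max_right _ _)
    rw [abs_mul, abs_of_nonneg (by positivity : (0:ℝ) ≤ t0^4)] at h2
    have ht04 : (0:ℝ) < t0^4 := by positivity
    have hx' : |x| ≤ (t0^4)⁻¹ := by
      rw [inv_eq_one_div, le_div_iff₀ ht04]
      nlinarith
    rw [mem_Icc]
    exact abs_le.1 hx'
  have := (measure_mono hsub).trans_eq (Real.volume_Icc (a := -(t0^4)⁻¹) (b := (t0^4)⁻¹))
  refine ENNReal.toReal_le_of_le_ofReal (by positivity) (this.trans (ENNReal.ofReal_le_ofReal ?_))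
  linarith

lemma g0_zero (t0 t5 t6 : ℝ) (ht0 : 0 < t0) (ht5 : (t0^4)⁻¹ < t5) :
    g0 t0 t5 t6 = 0 := by
  have hempty : {t1 : ℝ | h t0 t1 t5 t6 ≤ 1} = ∅ := by
    ext x
    simp only [mem_setOf_eq, mem_empty_iff_false, iff_false, not_le]
    have h1 : |t0 ^ 4 * t5| ≤ h t0 x t5 t6 := by unfold h; exact le_max_left _ _
    have ht04 : (0:ℝ) < t0^4 := by positivity
    have : (1:ℝ) < t0^4 * t5 := by
      rw [inv_lt_iff_one_lt_mul₀ ht04] at ht5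
      linarith [ht5]
    calc (1:ℝ) < t0^4*t5 := this
      _ ≤ |t0^4*t5| := le_abs_self _
      _ ≤ _ := h1
  unfold g0
  rw [hempty]
  simp

lemma sqrt_two_le : Real.sqrt 2 ≤ 3/2 := by
  rw [show (3/2:ℝ) = Real.sqrt ((3/2)^2) from (Real.sqrt_sq (by norm_num)).symm]
  exact Real.sqrt_le_sqrt (by norm_num)

lemma alg_lemma (t0 t6 : ℝ) (ht0 : 0 < t0) (hw : 0 < |t6|) :
    (t0^(1/2:ℝ)*|t6|^(-(3/4):ℝ)) * (2*Real.sqrt (2*(1/(t0^2*|t6|))))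
      + (8/t6^2) * (t0^(1/2:ℝ)*|t6|^(-(3/4):ℝ))^(-1:ℝ)
    ≤ 11 * (t0 ^ (-(1 / 2 : ℝ)) * |t6| ^ (-(5 / 4 : ℝ))) := by
  set u := t0
  set w := |t6| with hwdef
  have hu : 0 < u := ht0
  have hA : Real.sqrt (2*(1/(u^2*w))) ≤ (3/2) * (u^(-(1:ℝ)) * w^(-(1/2):ℝ)) := by
    have e : Real.sqrt (2*(1/(u^2*w))) = Real.sqrt 2 * (u^(-(1:ℝ)) * w^(-(1/2):ℝ)) := by
      rw [Real.sqrt_mul (by norm_num : (0:ℝ) ≤ 2), one_div, Real.sqrt_inv, Real.sqrt_mul (sq_nonneg u),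
        Real.sqrt_sq hu.le, mul_inv, Real.sqrt_eq_rpow w, ← Real.rpow_neg_one u,
        ← Real.rpow_neg_one (w^(1/2:ℝ)), ← Real.rpow_mul hw.le]
      norm_num
    rw [e]
    have hnn : (0:ℝ) ≤ u^(-(1:ℝ)) * w^(-(1/2):ℝ) := by positivity
    nlinarith [sqrt_two_le]
  have e1 : (u^(1/2:ℝ)*w^(-(3/4):ℝ)) * (u^(-(1:ℝ)) * w^(-(1/2):ℝ))
      = u ^ (-(1/2):ℝ) * w ^ (-(5/4):ℝ) := by
    rw [mul_mul_mul_comm, ← Real.rpow_add hu, ← Real.rpow_add hw]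
    norm_num
  have e2 : (8/t6^2) * (u^(1/2:ℝ)*w^(-(3/4):ℝ))^(-1:ℝ)
      = 8 * (u ^ (-(1/2):ℝ) * w ^ (-(5/4):ℝ)) := by
    have ht62 : t6^2 = w^(2:ℝ) := by
      rw [hwdef, show ((2:ℝ)) = ((2:ℕ):ℝ) by norm_num, Real.rpow_natCast, sq_abs]
    have einv : (u^(1/2:ℝ)*w^(-(3/4):ℝ))^(-1:ℝ) = u^(-(1/2):ℝ) * w^(3/4:ℝ) := by
      rw [Real.rpow_neg_one, mul_inv, ← Real.rpow_neg_one (u^(1/2:ℝ)),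
        ← Real.rpow_neg_one (w^(-(3/4):ℝ)), ← Real.rpow_mul hu.le, ← Real.rpow_mul hw.le]
      norm_num
    have ediv : (8:ℝ)/t6^2 = 8 * w^(-(2):ℝ) := by
      rw [ht62, div_eq_mul_inv, ← Real.rpow_neg_one (w^(2:ℝ)), ← Real.rpow_mul hw.le]
      norm_num
    rw [ediv, einv,
      show 8*w^(-(2):ℝ)*(u^(-(1/2):ℝ)*w^(3/4:ℝ)) = 8*(u^(-(1/2):ℝ)*(w^(-(2):ℝ)*w^(3/4:ℝ))) from by ring,
      ← Real.rpow_add hw]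
    norm_num
  have hs1A : (0:ℝ) ≤ u^(1/2:ℝ)*w^(-(3/4):ℝ) := by positivity
  have ht1 : (u^(1/2:ℝ)*w^(-(3/4):ℝ)) * (2*Real.sqrt (2*(1/(u^2*w))))
      ≤ 3 * (u ^ (-(1/2):ℝ) * w ^ (-(5/4):ℝ)) := by
    calc (u^(1/2:ℝ)*w^(-(3/4):ℝ)) * (2*Real.sqrt (2*(1/(u^2*w))))
        ≤ (u^(1/2:ℝ)*w^(-(3/4):ℝ)) * (2*((3/2) * (u^(-(1:ℝ)) * w^(-(1/2):ℝ)))) := by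
          apply mul_le_mul_of_nonneg_left (by linarith) hs1A
      _ = 3 * ((u^(1/2:ℝ)*w^(-(3/4):ℝ)) * (u^(-(1:ℝ)) * w^(-(1/2):ℝ))) := by ring
      _ = 3 * (u ^ (-(1/2):ℝ) * w ^ (-(5/4):ℝ)) := by rw [e1]
  have hP : (0:ℝ) ≤ u ^ (-(1/2):ℝ) * w ^ (-(5/4):ℝ) := by positivity
  have : (-(1/2:ℝ)) = -(1/2:ℝ) := rfl
  have goal_eq : (11:ℝ) * (u ^ (-(1 / 2 : ℝ)) * w ^ (-(5 / 4 : ℝ)))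
      = 11 * (u ^ (-(1/2):ℝ) * w ^ (-(5/4):ℝ)) := by norm_num
  rw [goal_eq]
  linarith [ht1, e2.le, e2.ge]

theorem g0_integral_t5_bound :
    ∃ C : ℝ, 0 < C ∧ ∀ t0 t6 : ℝ, 0 < t0 → t6 ≠ 0 →
      ∫ t5 in Set.Ioi (0 : ℝ), g0 t0 t5 t6 ≤
        C * min (t0 ^ (-(1 / 2 : ℝ)) * |t6| ^ (-(5 / 4 : ℝ))) (t0 ^ (-(8 : ℝ))) := by
  refine ⟨11, by norm_num, ?_⟩
  intro t0 t6 ht0 ht6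
  have hw : 0 < |t6| := abs_pos.2 ht6
  have hPpos : 0 < t0 ^ (-(1 / 2 : ℝ)) * |t6| ^ (-(5 / 4 : ℝ)) := by positivity
  have hQpos : 0 < t0 ^ (-(8:ℝ)) := by positivity
  by_cases hint : IntegrableOn (fun t5 => g0 t0 t5 t6) (Set.Ioi (0:ℝ)) volume
  swap
  · rw [integral_undef hint]
    have := lt_min hPpos hQpos
    nlinarith
  rw [show (11:ℝ) * min (t0 ^ (-(1 / 2 : ℝ)) * |t6| ^ (-(5 / 4 : ℝ))) (t0 ^ (-(8:ℝ)))
    = min (11 * (t0 ^ (-(1 / 2 : ℝ)) * |t6| ^ (-(5 / 4 : ℝ)))) (11 * t0 ^ (-(8:ℝ)))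
    from mul_min_of_nonneg _ _ (by norm_num)]
  refine le_min ?_ ?_
  · -- P bound
    set s₁ : ℝ := t0^(1/2:ℝ)*|t6|^(-(3/4):ℝ) with hs1def
    have hs₁ : 0 < s₁ := by positivity
    set A : ℝ := 2*Real.sqrt (2*(1/(t0^2*|t6|))) with hAdef
    have hA0 : 0 ≤ A := by positivity
    set B : ℝ := 8/t6^2 with hBdef
    have hB0 : 0 ≤ B := by positivity
    set G2 : ℝ → ℝ := fun s => (Ioc (0:ℝ) s₁).indicator (fun _ => A) s
      + (Ioi s₁).indicator (fun s => B * s^(-2:ℝ)) s with hG2def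
    have hint1 : IntegrableOn (fun s => (Ioc (0:ℝ) s₁).indicator (fun _ => A) s) (Ioi 0) volume := by
      exact ((integrableOn_const (C := A) measure_Ioc_lt_top.ne).integrable_indicator
        measurableSet_Ioc).integrableOn
    have hint2 : IntegrableOn (fun s => (Ioi s₁).indicator (fun s => B * s^(-2:ℝ)) s) (Ioi 0) volume := by
      have hbase : IntegrableOn (fun s : ℝ => B * s^(-2:ℝ)) (Ioi s₁) volume :=
        (integrableOn_Ioi_rpow_of_lt (by norm_num) hs₁).const_mul B
      exact (hbase.integrable_indicator measurableSet_Ioi).integrableOn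
    have hG2int : IntegrableOn G2 (Ioi 0) volume := hint1.add hint2
    have hmono : ∀ s ∈ Ioi (0:ℝ), g0 t0 s t6 ≤ G2 s := by
      intro s hs
      simp only [mem_Ioi] at hs
      by_cases hcase : s ≤ s₁
      · have h1 : (Ioc (0:ℝ) s₁).indicator (fun _ => A) s = A :=
          indicator_of_mem (mem_Ioc.mpr ⟨hs, hcase⟩) _
        have h2 : 0 ≤ (Ioi s₁).indicator (fun s => B * s^(-2:ℝ)) s := by
          apply indicator_nonneg
          intro x hx
          have : (0:ℝ) < x := lt_trans hs₁ hx
          positivity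
        rw [hG2def]
        simp only
        rw [h1]
        have := g0_bound_a t0 s t6 ht0 ht6
        rw [← hAdef] at this
        linarith
      · push_neg at hcase
        have h1 : (Ioc (0:ℝ) s₁).indicator (fun _ => A) s = 0 :=
          indicator_of_notMem (fun hmem => absurd hmem.2 (not_le.2 hcase)) _
        have h2 : (Ioi s₁).indicator (fun s => B * s^(-2:ℝ)) s = B * s^(-2:ℝ) :=
          indicator_of_mem hcase _
        rw [hG2def]
        simp only
        rw [h1, h2]
        have hs0 : (0:ℝ) < s := hs
        have hbb := g0_bound_b t0 s t6 ht0 ht6 (ne_of_gt hs0)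
        have : B * s^(-2:ℝ) = 8 / (s^2 * t6^2) := by
          rw [Real.rpow_neg hs0.le, show ((2:ℝ)) = ((2:ℕ):ℝ) by norm_num, Real.rpow_natCast, hBdef]
          field_simp
        rw [this]
        linarith
    have step1 : ∫ s in Ioi (0:ℝ), g0 t0 s t6 ≤ ∫ s in Ioi (0:ℝ), G2 s :=
      setIntegral_mono_on hint hG2int measurableSet_Ioi hmono
    have eval : ∫ s in Ioi (0:ℝ), G2 s = s₁ * A + B * s₁^(-1:ℝ) := by
      rw [hG2def]
      rw [integral_add hint1 hint2]
      congr 1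
      · rw [setIntegral_indicator measurableSet_Ioc,
          inter_eq_self_of_subset_right Ioc_subset_Ioi_self, setIntegral_const,
          Real.volume_real_Ioc_of_le (by linarith), smul_eq_mul, sub_zero]
      · rw [setIntegral_indicator measurableSet_Ioi,
          inter_eq_self_of_subset_right (Ioi_subset_Ioi hs₁.le), integral_const_mul,
          integral_Ioi_rpow_of_lt (by norm_num) hs₁]
        norm_num
    rw [eval] at step1
    refine step1.trans ?_
    rw [hs1def, hAdef, hBdef]
    exact alg_lemma t0 t6 ht0 hw
  · -- Q bound
    have hc4 : (0:ℝ) < (t0^4)⁻¹ := by positivity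
    set G1 : ℝ → ℝ := fun s => (Ioc (0:ℝ) ((t0^4)⁻¹)).indicator (fun _ => 2*(t0^4)⁻¹) s with hG1def
    have hG1int : IntegrableOn G1 (Ioi 0) volume :=
      ((integrableOn_const (C := (2*(t0^4)⁻¹ : ℝ)) measure_Ioc_lt_top.ne).integrable_indicator
        measurableSet_Ioc).integrableOn
    have hmono : ∀ s ∈ Ioi (0:ℝ), g0 t0 s t6 ≤ G1 s := by
      intro s hs
      simp only [mem_Ioi] at hs
      by_cases hcase : s ≤ (t0^4)⁻¹
      · rw [hG1def]
        simp only
        rw [indicator_of_mem (mem_Ioc.mpr ⟨hs, hcase⟩)]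
        exact g0_bound_c t0 s t6 ht0
      · push_neg at hcase
        rw [hG1def]
        simp only
        rw [indicator_of_notMem (fun hmem => absurd hmem.2 (not_le.2 hcase)),
          g0_zero t0 s t6 ht0 hcase]
    have step1 : ∫ s in Ioi (0:ℝ), g0 t0 s t6 ≤ ∫ s in Ioi (0:ℝ), G1 s :=
      setIntegral_mono_on hint hG1int measurableSet_Ioi hmono
    have eval : ∫ s in Ioi (0:ℝ), G1 s = (t0^4)⁻¹ * (2*(t0^4)⁻¹) := by
      rw [hG1def]
      rw [setIntegral_indicator measurableSet_Ioc,
        inter_eq_self_of_subset_right Ioc_subset_Ioi_self, setIntegral_const,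
        Real.volume_real_Ioc_of_le (by linarith), smul_eq_mul, sub_zero]
    rw [eval] at step1
    refine step1.trans ?_
    have hQ : t0 ^ (-(8:ℝ)) = (t0^8)⁻¹ := by
      rw [Real.rpow_neg ht0.le, show ((8:ℝ)) = ((8:ℕ):ℝ) by norm_num, Real.rpow_natCast]
    rw [hQ]
    have ht0' : t0 ≠ 0 := ne_of_gt ht0
    have h48 : (t0^4)⁻¹ * (t0^4)⁻¹ = (t0^8)⁻¹ := by
      field_simp
    nlinarith [hc4, h48, inv_nonneg.2 (pow_nonneg ht0.le 8)]
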